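/- Let N ≥ 1 and let L be a closed subgroup of the N-dimensional torus 𝕋^N = (ℝ/ℤ)^N. Then there exist a natural number n with 0 ≤ n ≤ N and a finite abelian group F such that L, with its subspace topology and subgroup structure, is isomorphic as a topological group to 𝕋^n × F. -/

import Mathlib

open Filter Topology Submodule

noncomputable section

lemma discrete_of_no_line {N : ℕ} (S : AddSubgroup (Fin N → ℝ)) (hS : IsClosed (S : Set (Fin N → ℝ)))
    (h : ∀ u : Fin N → ℝ, (∀ t : ℝ, t • u ∈ S) → u = 0) :
    ∃ ε : ℝ, 0 < ε ∧ ∀ w ∈ S, ‖w‖ < ε → w = 0 := by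
  by_contra hc
  push_neg at hc
  choose w hwS hwn hw0 using fun k : ℕ => hc (1/(k+1)) (by positivity)
  have hnorm : ∀ k, ‖w k‖ ≠ 0 := fun k => norm_ne_zero_iff.mpr (hw0 k)
  have hnormpos : ∀ k, 0 < ‖w k‖ := fun k => (norm_pos_iff).mpr (hw0 k)
  set u : ℕ → (Fin N → ℝ) := fun k => ‖w k‖⁻¹ • w k with hu_def
  have hu : ∀ k, u k ∈ Metric.sphere (0 : Fin N → ℝ) 1 := by
    intro k
    simp [u, norm_smul, inv_mul_cancel₀ (hnorm k), abs_of_pos (inv_pos.mpr (hnormpos k))]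
  obtain ⟨u₀, hu₀mem, φ, hφ, hconv⟩ :=
    (isCompact_sphere (0 : Fin N → ℝ) 1).tendsto_subseq hu
  have hwlim : Tendsto (fun k => ‖w (φ k)‖) atTop (𝓝 0) := by
    have hb : ∀ k : ℕ, ‖w (φ k)‖ ≤ 1/(k+1) := by
      intro k
      have h1 : ‖w (φ k)‖ < 1/(φ k + 1) := hwn (φ k)
      have h2 : (1:ℝ)/(φ k + 1) ≤ 1/(k+1) := by
        apply one_div_le_one_div_of_le (by positivity)
        have := hφ.id_le k
        push_cast
        exact_mod_cast Nat.succ_le_succ this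
      linarith
    have h0 : Tendsto (fun k : ℕ => 1/((k:ℝ)+1)) atTop (𝓝 0) := tendsto_one_div_add_atTop_nhds_zero_nat
    exact squeeze_zero (fun k => norm_nonneg _) hb h0
  have key : ∀ t : ℝ, t • u₀ ∈ S := by
    intro t
    have hmem : ∀ k, (⌊t / ‖w (φ k)‖⌋ : ℤ) • w (φ k) ∈ (S : Set (Fin N → ℝ)) :=
      fun k => S.zsmul_mem (hwS (φ k)) _
    have hscal : Tendsto (fun k => (⌊t / ‖w (φ k)‖⌋ : ℝ) * ‖w (φ k)‖) atTop (𝓝 t) := by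
      have hb : ∀ k, ‖(⌊t / ‖w (φ k)‖⌋ : ℝ) * ‖w (φ k)‖ - t‖ ≤ ‖w (φ k)‖ := by
        intro k
        have hr := hnormpos (φ k)
        set r := ‖w (φ k)‖
        have : (⌊t / r⌋ : ℝ) * r - t = (( ⌊t / r⌋ : ℝ) - t / r) * r := by field_simp
        rw [this]
        rw [Real.norm_eq_abs, abs_mul, abs_of_pos hr]
        have h1 : |(⌊t / r⌋ : ℝ) - t / r| ≤ 1 := by
          rw [abs_le]
          constructor
          · linarith [Int.lt_floor_add_one (t / r)]
          · linarith [Int.floor_le (t / r)]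
        nlinarith [hr.le]
      have := squeeze_zero_norm hb hwlim
      have h2 := this.add_const t
      simpa using h2
    have hlim : Tendsto (fun k => (⌊t / ‖w (φ k)‖⌋ : ℤ) • w (φ k)) atTop (𝓝 (t • u₀)) := by
      have heq : ∀ k, (⌊t / ‖w (φ k)‖⌋ : ℤ) • w (φ k)
          = ((⌊t / ‖w (φ k)‖⌋ : ℝ) * ‖w (φ k)‖) • u (φ k) := by
        intro k
        rw [mul_smul]
        rw [← Int.cast_smul_eq_zsmul ℝ]
        congr 1
        rw [hu_def]
        rw [smul_inv_smul₀ (hnorm (φ k))]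
      simp only [heq]
      exact hscal.smul hconv
    exact hS.mem_of_tendsto hlim (Eventually.of_forall hmem)
  have := h u₀ key
  rw [this] at hu₀mem
  simp at hu₀mem


lemma addCircle_coe_int_eq_zero (z : ℤ) : ((z : ℝ) : AddCircle (1:ℝ)) = 0 := by
  rw [AddCircle.coe_eq_zero_iff]; exact ⟨z, by simp⟩

lemma addCircle_zsmul_coe (c : ℤ) (r : ℝ) :
    c • ((r : ℝ) : AddCircle (1:ℝ)) = (((c : ℝ) * r : ℝ) : AddCircle (1:ℝ)) := by
  rw [← zsmul_eq_mul]
  push_cast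
  rfl

lemma addCircle_zsmul_coe_eq_zero_iff (c : ℤ) (r : ℝ) :
    c • ((r : ℝ) : AddCircle (1:ℝ)) = 0 ↔ ∃ n : ℤ, (c : ℝ) * r = n := by
  rw [addCircle_zsmul_coe, AddCircle.coe_eq_zero_iff]
  constructor
  · rintro ⟨n, hn⟩; exact ⟨n, by simpa using hn.symm⟩
  · rintro ⟨n, hn⟩; exact ⟨n, by simpa using hn.symm⟩

lemma finite_torsion (c : ℤ) (hc : c ≠ 0) : Finite {x : AddCircle (1:ℝ) // c • x = 0} := by
  have hcR : (c : ℝ) ≠ 0 := Int.cast_ne_zero.mpr hc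
  set h : Fin c.natAbs → {x : AddCircle (1:ℝ) // c • x = 0} := fun i =>
    ⟨(((i : ℝ) / (c : ℝ) : ℝ) : AddCircle (1:ℝ)), by
      rw [addCircle_zsmul_coe_eq_zero_iff]
      exact ⟨(i : ℤ), by field_simp; norm_cast⟩⟩ with hh
  apply Finite.of_surjective h
  rintro ⟨x, hx⟩
  obtain ⟨t, rfl⟩ := QuotientAddGroup.mk_surjective x
  rw [addCircle_zsmul_coe_eq_zero_iff] at hx
  obtain ⟨n, hn⟩ := hx
  have hnatpos : 0 < (c.natAbs : ℤ) := by exact_mod_cast Int.natAbs_pos.mpr hc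
  set r : ℤ := n % (c.natAbs : ℤ) with hr
  have hr0 : 0 ≤ r := Int.emod_nonneg n (by omega)
  have hrlt : r < (c.natAbs : ℤ) := Int.emod_lt_of_pos n hnatpos
  have hdvd : (c : ℤ) ∣ (n - r) := by
    have h1 : ((c.natAbs : ℤ)) ∣ (n - r) := Int.dvd_self_sub_of_emod_eq rfl
    exact (Int.natAbs_dvd).mp h1
  obtain ⟨q, hq⟩ := hdvd
  refine ⟨⟨r.toNat, by omega⟩, ?_⟩
  apply Subtype.ext
  show ((((r.toNat : ℕ) : ℝ) / (c:ℝ) : ℝ) : AddCircle (1:ℝ)) = (t : AddCircle (1:ℝ))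
  have ht : t = (n : ℝ) / c := by field_simp at hn ⊢; linarith [hn]
  have hrt : ((r.toNat : ℕ) : ℝ) = (r : ℝ) := by
    norm_cast
    omega
  rw [hrt, ht]
  have : (r : ℝ) / c - (n : ℝ) / c = ((-q : ℤ) : ℝ) := by
    have hqr : (n : ℝ) - r = (c : ℝ) * q := by exact_mod_cast congrArg (Int.cast : ℤ → ℝ) hq
    push_cast
    field_simp
    linarith [hqr]
  rw [show ((r:ℝ)/c : ℝ) = (n:ℝ)/c + ((-q : ℤ) : ℝ) by linarith [this]]
  push_cast
  rw [AddCircle.coe_add]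
  simp [addCircle_coe_int_eq_zero]


def pairZR {N : ℕ} (m : Fin N → ℤ) (x : Fin N → ℝ) : ℝ := ∑ i, (m i : ℝ) * x i
lemma pairZR_add {N : ℕ} (a b : Fin N → ℤ) (x : Fin N → ℝ) :
    pairZR (a + b) x = pairZR a x + pairZR b x := by
  simp [pairZR, add_mul, Finset.sum_add_distrib]
def pairHom {N : ℕ} (x : Fin N → ℝ) : (Fin N → ℤ) →+ ℝ :=
  AddMonoidHom.mk' (fun m => pairZR m x) (fun a b => pairZR_add a b x)
lemma pairHom_apply {N : ℕ} (x : Fin N → ℝ) (m : Fin N → ℤ) : pairHom x m = pairZR m x := rfl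
lemma pairZR_zsmul {N : ℕ} (c : ℤ) (a : Fin N → ℤ) (x : Fin N → ℝ) :
    pairZR (c • a) x = c * pairZR a x := by
  simp [pairZR, Finset.mul_sum, mul_assoc]
lemma pairZR_single {N : ℕ} (i : Fin N) (x : Fin N → ℝ) :
    pairZR (Pi.single i 1) x = x i := by
  rw [pairZR, Finset.sum_eq_single i]
  · simp
  · intro j _ hj; simp [Pi.single_apply, hj]
  · simp
lemma pairZR_int {N : ℕ} (m ζ : Fin N → ℤ) :
    pairZR m (fun i => (ζ i : ℝ)) = ((∑ i, m i * ζ i : ℤ) : ℝ) := by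
  rw [pairZR]; push_cast; rfl
lemma pairZR_add_right {N : ℕ} (m : Fin N → ℤ) (x y : Fin N → ℝ) :
    pairZR m (x + y) = pairZR m x + pairZR m y := by
  simp [pairZR, mul_add, Finset.sum_add_distrib]
lemma pairZR_smul_right {N : ℕ} (m : Fin N → ℤ) (t : ℝ) (x : Fin N → ℝ) :
    pairZR m (t • x) = t * pairZR m x := by
  simp [pairZR, Finset.mul_sum]; congr 1; funext i; ring
lemma pairZR_repr {N : ℕ} (bM : Module.Basis (Fin N) ℤ (Fin N → ℤ)) (m : Fin N → ℤ) (x : Fin N → ℝ) :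
    pairZR m x = ∑ j, (bM.repr m j : ℝ) * pairZR (bM j) x := by
  conv_lhs => rw [← bM.sum_repr m, ← pairHom_apply, map_sum]
  refine Finset.sum_congr rfl fun j _ => ?_
  rw [AddMonoidHom.map_zsmul, pairHom_apply]
  simp [zsmul_eq_mul]

lemma exists_int_functional {N : ℕ} (W : AddSubgroup (Fin N → ℝ))
    (hWc : IsClosed (W : Set (Fin N → ℝ)))
    (hZ : ∀ m : Fin N → ℤ, (fun i => (m i : ℝ)) ∈ W)
    {x : Fin N → ℝ} (hx : x ∉ W) :
    ∃ m : Fin N → ℤ, (∀ w ∈ W, ∃ z : ℤ, pairZR m w = z) ∧ ¬ ∃ z : ℤ, pairZR m x = z := by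
  classical
  -- the maximal linear subspace contained in W
  set V : Submodule ℝ (Fin N → ℝ) :=
    { carrier := {v | ∀ t : ℝ, t • v ∈ W}
      add_mem' := by intro a b ha hb t; rw [smul_add]; exact W.add_mem (ha t) (hb t)
      zero_mem' := by intro t; rw [smul_zero]; exact W.zero_mem
      smul_mem' := by intro c v hv t; rw [smul_smul]; exact hv (t * c) } with hV_def
  have hVW : ∀ v ∈ V, v ∈ W := fun v hv => by simpa using hv 1
  obtain ⟨V', hcompl⟩ := Submodule.exists_isCompl V
  have hV'closed : IsClosed (V' : Set (Fin N → ℝ)) := Submodule.closed_of_finiteDimensional V'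
  set prV : (Fin N → ℝ) →ₗ[ℝ] V := V.projectionOnto V' hcompl
  set prV' : (Fin N → ℝ) →ₗ[ℝ] V' := V'.projectionOnto V hcompl.symm
  have hdecomp : ∀ y : Fin N → ℝ, (prV y : Fin N → ℝ) + (prV' y : Fin N → ℝ) = y :=
    fun y => Submodule.projection_add_projection_eq_self hcompl y
  have hsubV : ∀ y : Fin N → ℝ, y - (prV' y : Fin N → ℝ) ∈ V := by
    intro y
    have := hdecomp y
    have : y - (prV' y : Fin N → ℝ) = (prV y : Fin N → ℝ) := (eq_sub_of_add_eq this).symm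
    rw [this]; exact (prV y).2
  -- the lattice part
  set Λ : Submodule ℤ ↥V' :=
    { carrier := {y : ↥V' | (y : Fin N → ℝ) ∈ W}
      add_mem' := by intro a b ha hb; exact W.add_mem ha hb
      zero_mem' := W.zero_mem
      smul_mem' := by
        intro c v hv
        have : ((c • v : ↥V') : Fin N → ℝ) = c • (v : Fin N → ℝ) := rfl
        simpa [this] using W.zsmul_mem hv c } with hΛ_def
  -- member of W decomposes
  have hprW : ∀ w ∈ W, (prV' w : Fin N → ℝ) ∈ W ∧ prV' w ∈ Λ := by
    intro w hw
    have h1 : w - (prV' w : Fin N → ℝ) ∈ W := hVW _ (hsubV w)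
    have h2 : (prV' w : Fin N → ℝ) ∈ W := by
      have := W.sub_mem hw h1
      simpa using this
    exact ⟨h2, h2⟩
  -- discreteness
  have hdisc : ∃ ε : ℝ, 0 < ε ∧ ∀ w : ↥V', w ∈ Λ → ‖w‖ < ε → w = 0 := by
    obtain ⟨ε, hε, hsep⟩ := discrete_of_no_line (W ⊓ V'.toAddSubgroup)
      (by rw [AddSubgroup.coe_inf]; exact hWc.inter hV'closed)
      (by
        intro u hu
        have huV : u ∈ V := fun t => ((hu t).1)
        have huV' : u ∈ V' := by simpa using (hu 1).2
        have : u ∈ V ⊓ V' := ⟨huV, huV'⟩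
        rwa [hcompl.inf_eq_bot, Submodule.mem_bot] at this)
    refine ⟨ε, hε, ?_⟩
    intro w hw hnorm
    have : (w : Fin N → ℝ) = 0 := hsep _ ⟨hw, w.2⟩ hnorm
    exact Subtype.ext this
  haveI hΛdisc : DiscreteTopology ↥Λ := by
    obtain ⟨ε, hε, hsep⟩ := hdisc
    refine discreteTopology_iff_isOpen_singleton_zero.mpr ?_
    refine ⟨Metric.ball 0 ε, Metric.isOpen_ball, ?_⟩
    ext y
    simp only [Set.mem_preimage, Metric.mem_ball, dist_zero_right, Set.mem_singleton_iff]
    constructor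
    · intro hy
      exact Subtype.ext (hsep _ y.2 hy)
    · intro hy; rw [hy]; simpa using hε
  -- Λ spans V'
  haveI hΛlat : IsZLattice ℝ Λ := by
    constructor
    rw [eq_top_iff]
    rintro y -
    have hyW : (y : Fin N → ℝ) ∈ span ℝ ((W : Set (Fin N → ℝ)) ∩ V') := by
      -- first, span of W is everything
      have hspanW : span ℝ (W : Set (Fin N → ℝ)) = ⊤ := by
        rw [eq_top_iff]
        rintro z -
        rw [pi_eq_sum_univ z]
        refine sum_mem fun i _ => smul_mem _ _ (subset_span ?_)
        have := hZ (Pi.single i 1)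
        have heq : (fun j => ((Pi.single i 1 : Fin N → ℤ) j : ℝ)) = (fun j => if i = j then (1:ℝ) else 0) := by
          funext j
          by_cases h : i = j <;> simp [Pi.single_apply, h, eq_comm]
        rw [heq] at this
        exact this
      have hWle : (W : Set (Fin N → ℝ)) ⊆ ↑(V ⊔ span ℝ ((W : Set (Fin N → ℝ)) ∩ V')) := by
        intro w hw
        have h1 := hsubV w
        have h2 : (prV' w : Fin N → ℝ) ∈ (W : Set (Fin N → ℝ)) ∩ V' := ⟨(hprW w hw).1, (prV' w).2⟩
        have : w = (w - (prV' w : Fin N → ℝ)) + (prV' w : Fin N → ℝ) := by abel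
        rw [this]
        exact Submodule.add_mem _ (Submodule.mem_sup_left h1) (Submodule.mem_sup_right (subset_span h2))
      have htop : (⊤ : Submodule ℝ (Fin N → ℝ)) ≤ V ⊔ span ℝ ((W : Set (Fin N → ℝ)) ∩ V') := by
        rw [← hspanW]
        exact span_le.mpr hWle
      have hy2 : (y : Fin N → ℝ) ∈ V ⊔ span ℝ ((W : Set (Fin N → ℝ)) ∩ V') := htop trivial
      obtain ⟨v, hv, s, hs, hvs⟩ := Submodule.mem_sup.mp hy2
      have hsV' : s ∈ V' := by
        have : span ℝ ((W : Set (Fin N → ℝ)) ∩ V') ≤ V' := span_le.mpr (fun z hz => hz.2)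
        exact this hs
      have hvbot : v ∈ V ⊓ V' := by
        constructor
        · exact hv
        · have : v = (y : Fin N → ℝ) - s := by linear_combination (norm := module) hvs
          rw [this]
          exact V'.sub_mem y.2 hsV'
      rw [hcompl.inf_eq_bot, Submodule.mem_bot] at hvbot
      rw [hvbot, zero_add] at hvs
      rwa [hvs] at hs
    -- now push into the subtype
    have himg : (V'.subtype) '' (Λ : Set ↥V') = (W : Set (Fin N → ℝ)) ∩ V' := by
      ext z
      constructor
      · rintro ⟨z', hz', rfl⟩; exact ⟨hz', z'.2⟩
      · rintro ⟨hzW, hzV'⟩; exact ⟨⟨z, hzV'⟩, hzW, rfl⟩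
    have hmap : Submodule.map V'.subtype (span ℝ (Λ : Set ↥V')) = span ℝ ((W : Set (Fin N → ℝ)) ∩ V') := by
      rw [Submodule.map_span, himg]
    have : (y : Fin N → ℝ) ∈ Submodule.map V'.subtype (span ℝ (Λ : Set ↥V')) := by
      rw [hmap]; exact hyW
    obtain ⟨y', hy', hyy⟩ := this
    have : y' = y := Subtype.ext hyy
    rwa [this] at hy'
  haveI : Module.Free ℤ ↥Λ := ZLattice.module_free ℝ Λ
  haveI : Module.Finite ℤ ↥Λ := ZLattice.module_finite ℝ Λ
  set ι := Module.Free.ChooseBasisIndex ℤ ↥Λ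
  set bZ : Module.Basis ι ℤ ↥Λ := Module.Free.chooseBasis ℤ ↥Λ
  set bR : Module.Basis ι ℝ ↥V' := bZ.ofZLatticeBasis ℝ Λ with hbR_def
  -- the point y := prV' x is not in Λ
  set y : ↥V' := prV' x with hy_def
  have hyW : (y : Fin N → ℝ) ∉ W := by
    intro hyW
    apply hx
    have h1 : x - (y : Fin N → ℝ) ∈ W := hVW _ (hsubV x)
    have := W.add_mem h1 hyW
    simpa using this
  -- find a coordinate of y that is not an integer
  have hcoord : ∃ i : ι, ∀ z : ℤ, bR.repr y i ≠ z := by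
    by_contra hcon
    push_neg at hcon
    choose c hc using hcon
    apply hyW
    have : y ∈ Λ := by
      have hrepr := bR.sum_repr y
      rw [← hrepr]
      refine sum_mem fun i _ => ?_
      rw [hc i, Int.cast_smul_eq_zsmul]
      refine Λ.smul_mem _ ?_
      rw [hbR_def, bZ.ofZLatticeBasis_apply ℝ Λ]
      exact (bZ i).2
    exact this
  obtain ⟨i, hi⟩ := hcoord
  set f : (Fin N → ℝ) →ₗ[ℝ] ℝ := (bR.coord i) ∘ₗ prV' with hf_def
  have hfW : ∀ w ∈ W, ∃ z : ℤ, f w = z := by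
    intro w hw
    have hΛw : prV' w ∈ Λ := (hprW w hw).2
    refine ⟨bZ.repr ⟨prV' w, hΛw⟩ i, ?_⟩
    have := bZ.ofZLatticeBasis_repr_apply ℝ Λ ⟨prV' w, hΛw⟩ i
    simpa [hf_def, Module.Basis.coord_apply, hbR_def] using this
  have hfx : ∀ z : ℤ, f x ≠ z := by
    intro z hz
    exact hi z hz
  -- build m
  have hm : ∀ j : Fin N, ∃ z : ℤ, f (fun k => ((Pi.single j 1 : Fin N → ℤ) k : ℝ)) = z :=
    fun j => hfW _ (hZ (Pi.single j 1))
  choose m hm' using hm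
  have hsingle : ∀ j : Fin N, (fun k => ((Pi.single j 1 : Fin N → ℤ) k : ℝ))
      = (fun k => if j = k then (1:ℝ) else 0) := by
    intro j
    funext k
    by_cases h : j = k <;> simp [Pi.single_apply, h, eq_comm]
  have hpair : ∀ v : Fin N → ℝ, pairZR m v = f v := by
    intro v
    conv_rhs => rw [pi_eq_sum_univ v, map_sum]
    rw [pairZR]
    refine Finset.sum_congr rfl fun j _ => ?_
    rw [map_smul, smul_eq_mul]
    have := hm' j
    rw [hsingle j] at this
    rw [this, mul_comm]
  refine ⟨m, ?_, ?_⟩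
  · intro w hw
    obtain ⟨z, hz⟩ := hfW w hw
    refine ⟨z, ?_⟩
    rw [← hz, hpair w]
  · intro ⟨z, hz⟩
    apply hfx z
    rw [← hz, hpair x]


/-- Every closed subgroup of the torus `𝕋^N = (ℝ/ℤ)^N` is isomorphic, as a
topological group, to `𝕋^n × F` for some `n ≤ N` and some finite abelian group `F`. -/
theorem closed_subgroup_of_torus_iso_subtorus_prod_finite
    (N : ℕ) (hN : 1 ≤ N)
    (L : AddSubgroup (Fin N → AddCircle (1 : ℝ)))
    (hL : IsClosed (L : Set (Fin N → AddCircle (1 : ℝ)))) :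
    ∃ (n : ℕ), n ≤ N ∧
      ∃ (F : Type) (_ : AddCommGroup F) (_ : Fintype F) (_ : TopologicalSpace F),
        DiscreteTopology F ∧
        ∃ e : L ≃+ ((Fin n → AddCircle (1 : ℝ)) × F),
          Continuous e ∧ Continuous e.symm := by
  classical
  set π : (Fin N → ℝ) → (Fin N → AddCircle (1:ℝ)) := fun x i => (x i : AddCircle (1:ℝ)) with hπ_def
  have hπadd : ∀ a b, π (a + b) = π a + π b := by
    intro a b; funext i; push_cast; rfl
  set πhom : (Fin N → ℝ) →+ (Fin N → AddCircle (1:ℝ)) := AddMonoidHom.mk' π hπadd with hπhom_def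
  have hπcont : Continuous π := by
    refine continuous_pi fun i => ?_
    exact (AddCircle.continuous_mk' 1).comp (continuous_apply i)
  have hπqm : IsOpenQuotientMap π :=
    IsOpenQuotientMap.piMap (fun i => QuotientAddGroup.isOpenQuotientMap_mk)
  have hπsurj : Function.Surjective π := hπqm.surjective
  -- zero iff integral
  have hπ0 : ∀ u : Fin N → ℝ, π u = 0 ↔ ∀ i, ∃ z : ℤ, u i = z := by
    intro u
    constructor
    · intro h i
      have := congrFun h i
      rw [hπ_def] at this
      simp only [Pi.zero_apply] at this
      rw [AddCircle.coe_eq_zero_iff] at this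
      obtain ⟨n, hn⟩ := this
      exact ⟨n, by simpa using hn.symm⟩
    · intro h
      funext i
      obtain ⟨z, hz⟩ := h i
      show (u i : AddCircle (1:ℝ)) = 0
      rw [hz, AddCircle.coe_eq_zero_iff]
      exact ⟨z, by simp⟩
  set W : AddSubgroup (Fin N → ℝ) := L.comap πhom with hW_def
  have hWc : IsClosed (W : Set (Fin N → ℝ)) := hL.preimage hπcont
  have hWmem : ∀ x, x ∈ W ↔ π x ∈ L := fun x => Iff.rfl
  have hZ : ∀ m : Fin N → ℤ, (fun i => (m i : ℝ)) ∈ W := by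
    intro m
    rw [hWmem]
    have : π (fun i => (m i : ℝ)) = 0 := by
      rw [hπ0]; exact fun i => ⟨m i, rfl⟩
    rw [this]; exact L.zero_mem
  -- the annihilator
  set M : Submodule ℤ (Fin N → ℤ) :=
    { carrier := {m | ∀ w ∈ W, ∃ z : ℤ, pairZR m w = z}
      add_mem' := by
        intro a b ha hb w hw
        obtain ⟨za, hza⟩ := ha w hw
        obtain ⟨zb, hzb⟩ := hb w hw
        exact ⟨za + zb, by rw [pairZR_add, hza, hzb]; push_cast; ring⟩
      zero_mem' := by
        intro w hw
        refine ⟨0, ?_⟩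
        have : (0 : Fin N → ℤ) = (0 : ℤ) • (0 : Fin N → ℤ) := by simp
        rw [this, pairZR_zsmul]
        simp
      smul_mem' := by
        intro c m hm w hw
        obtain ⟨z, hz⟩ := hm w hw
        exact ⟨c * z, by rw [pairZR_zsmul, hz]; push_cast; ring⟩ } with hM_def
  have hMmem : ∀ m, m ∈ M ↔ ∀ w ∈ W, ∃ z : ℤ, pairZR m w = z := fun m => Iff.rfl
  -- duality
  have hdual : ∀ x : Fin N → ℝ, x ∈ W ↔ ∀ m ∈ M, ∃ z : ℤ, pairZR m x = z := by
    intro x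
    constructor
    · intro hx m hm
      exact hm x hx
    · intro h
      by_contra hx
      obtain ⟨m, hm1, hm2⟩ := exists_int_functional W hWc hZ hx
      exact hm2 (h m hm1)
  -- Smith normal form
  obtain ⟨k, snf⟩ := M.smithNormalForm (Pi.basisFun ℤ (Fin N))
  obtain ⟨bM, bN, f, a, hsnf⟩ := snf
  have ha : ∀ i, a i ≠ 0 := by
    intro i hai
    have h0 : ((bN i : ↥M) : Fin N → ℤ) = 0 := by rw [hsnf i, hai, zero_smul]
    exact bN.ne_zero i (Subtype.ext h0)
  set d : Fin N → ℤ := Function.extend f a (fun _ => (0:ℤ)) with hd_def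
  have hdf : ∀ i, d (f i) = a i := fun i => f.injective.extend_apply a _ i
  have hdnf : ∀ j, j ∉ Set.range f → d j = 0 := by
    intro j hj
    rw [hd_def, Function.extend_apply' a _ j (by simpa using hj)]
  -- the linear map T
  set T : (Fin N → ℝ) →ₗ[ℝ] (Fin N → ℝ) :=
    { toFun := fun x j => pairZR (bM j) x
      map_add' := by intro x y; funext j; simp [pairZR_add_right]
      map_smul' := by intro t x; funext j; simp [pairZR_smul_right] } with hT_def
  have hTapp : ∀ x j, T x j = pairZR (bM j) x := fun x j => rfl
  have hTinj : Function.Injective T := by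
    rw [← LinearMap.ker_eq_bot, eq_bot_iff]
    intro x hx
    rw [LinearMap.mem_ker] at hx
    have hzero : ∀ j, pairZR (bM j) x = 0 := fun j => congrFun hx j
    have : ∀ i, x i = 0 := by
      intro i
      rw [← pairZR_single i x, pairZR_repr bM]
      simp [hzero]
    simpa [funext_iff] using this
  have hTbij : Function.Bijective T :=
    ⟨hTinj, (LinearMap.injective_iff_surjective).mp hTinj⟩
  set Te : (Fin N → ℝ) ≃ₗ[ℝ] (Fin N → ℝ) := LinearEquiv.ofBijective T hTbij with hTe_def
  have hTeapp : ∀ x, Te x = T x := fun x => rfl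
  -- T preserves integral points both ways
  have hTZ : ∀ x : Fin N → ℝ, (∀ i, ∃ z : ℤ, x i = z) ↔ (∀ j, ∃ z : ℤ, T x j = z) := by
    intro x
    constructor
    · intro h j
      choose ζ hζ using h
      have hxz : x = fun i => (ζ i : ℝ) := by funext i; exact hζ i
      rw [hTapp, hxz, pairZR_int]
      exact ⟨_, rfl⟩
    · intro h i
      choose z hz using h
      rw [← pairZR_single i x, pairZR_repr bM]
      refine ⟨∑ j, bM.repr (Pi.single i 1) j * z j, ?_⟩
      push_cast
      refine Finset.sum_congr rfl fun j _ => ?_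
      rw [← hTapp, hz j]
  -- characterization of W
  have hWchar : ∀ x, x ∈ W ↔ ∀ i : Fin k, ∃ z : ℤ, (a i : ℝ) * T x (f i) = z := by
    intro x
    rw [hdual]
    constructor
    · intro h i
      obtain ⟨z, hz⟩ := h ((bN i : ↥M) : Fin N → ℤ) (bN i : ↥M).2
      refine ⟨z, ?_⟩
      rw [← hz, hsnf i, pairZR_zsmul, hTapp]
    · intro h m hm
      choose z hz using h
      have hrep := bN.sum_repr ⟨m, hm⟩
      have hrep2 : m = ∑ i, bN.repr ⟨m, hm⟩ i • ((bN i : ↥M) : Fin N → ℤ) := by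
        have := congrArg (fun (v : ↥M) => (v : Fin N → ℤ)) hrep
        simp only [Submodule.coe_sum, Submodule.coe_smul] at this
        exact this.symm
      rw [hrep2]
      refine ⟨∑ i, bN.repr ⟨m, hm⟩ i * z i, ?_⟩
      rw [← pairHom_apply, map_sum]
      push_cast
      refine Finset.sum_congr rfl fun i _ => ?_
      rw [AddMonoidHom.map_zsmul, pairHom_apply, hsnf i, pairZR_zsmul, ← hTapp, zsmul_eq_mul]
      rw [← hz i]
  -- continuity of the linear equivalences
  have hTecont : Continuous Te := T.continuous_of_finiteDimensional
  have hTesymmcont : Continuous Te.symm := Te.symm.toLinearMap.continuous_of_finiteDimensional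
  -- a set-theoretic lift of π
  set lift : (Fin N → AddCircle (1:ℝ)) → (Fin N → ℝ) := fun z => (hπsurj z).choose with hlift_def
  have hlift : ∀ z, π (lift z) = z := fun z => (hπsurj z).choose_spec
  -- equality of π-images
  have hπeq : ∀ u v : Fin N → ℝ, π u = π v ↔ ∀ i, ∃ z : ℤ, u i - v i = z := by
    intro u v
    have hπsub : π (u - v) = π u - π v := by
      funext i; push_cast; rfl
    have h1 : π u = π v ↔ π (u - v) = 0 := by
      rw [← sub_eq_zero, hπsub]
    rw [h1, hπ0]
    exact Iff.rfl
  -- descends through π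
  have hwd : ∀ u v : Fin N → ℝ, π u = π v → π (Te u) = π (Te v) := by
    intro u v h
    rw [hπeq] at h ⊢
    have h2 : ∀ j, ∃ z : ℤ, T (u - v) j = z := (hTZ (u - v)).mp (by simpa using h)
    intro i
    obtain ⟨z, hz⟩ := h2 i
    refine ⟨z, ?_⟩
    have hsub : Te u - Te v = T (u - v) := by
      rw [← map_sub Te u v]; exact hTeapp _
    have h3 := congrFun hsub i
    simp only [Pi.sub_apply] at h3
    rw [h3, hz]
  have hwd' : ∀ u v : Fin N → ℝ, π u = π v → π (Te.symm u) = π (Te.symm v) := by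
    intro u v h
    rw [hπeq] at h ⊢
    have hT : T (Te.symm u - Te.symm v) = u - v := by
      rw [← hTeapp, map_sub, Te.apply_symm_apply, Te.apply_symm_apply]
    have h2 : ∀ i, ∃ z : ℤ, (Te.symm u - Te.symm v) i = z := by
      refine (hTZ _).mpr ?_
      rw [hT]
      simpa using h
    intro i
    obtain ⟨z, hz⟩ := h2 i
    exact ⟨z, by simpa using hz⟩
  set Tb : (Fin N → AddCircle (1:ℝ)) → (Fin N → AddCircle (1:ℝ)) := fun z => π (Te (lift z))
    with hTb_def
  set Tbi : (Fin N → AddCircle (1:ℝ)) → (Fin N → AddCircle (1:ℝ)) := fun z => π (Te.symm (lift z))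
    with hTbi_def
  have hTbπ : ∀ u, Tb (π u) = π (Te u) := fun u => hwd _ _ (hlift (π u))
  have hTbiπ : ∀ u, Tbi (π u) = π (Te.symm u) := fun u => hwd' _ _ (hlift (π u))
  set eT : (Fin N → AddCircle (1:ℝ)) ≃+ (Fin N → AddCircle (1:ℝ)) :=
    { toFun := Tb
      invFun := Tbi
      left_inv := by
        intro z
        obtain ⟨u, rfl⟩ := hπsurj z
        rw [hTbπ, hTbiπ, Te.symm_apply_apply]
      right_inv := by
        intro z
        obtain ⟨u, rfl⟩ := hπsurj z
        rw [hTbiπ, hTbπ, Te.apply_symm_apply]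
      map_add' := by
        intro z w
        show Tb (z + w) = Tb z + Tb w
        obtain ⟨u, rfl⟩ := hπsurj z
        obtain ⟨v, rfl⟩ := hπsurj w
        rw [← hπadd, hTbπ, hTbπ, hTbπ, map_add, hπadd] } with heT_def
  have hTbcont : Continuous Tb := by
    rw [hπqm.isQuotientMap.continuous_iff]
    have : Tb ∘ π = π ∘ Te := funext fun u => hTbπ u
    rw [this]
    exact hπcont.comp hTecont
  have hTbicont : Continuous Tbi := by
    rw [hπqm.isQuotientMap.continuous_iff]
    have : Tbi ∘ π = π ∘ Te.symm := funext fun u => hTbiπ u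
    rw [this]
    exact hπcont.comp hTesymmcont
  -- target subgroups
  set S : Fin N → AddSubgroup (AddCircle (1:ℝ)) := fun j =>
    { carrier := {x | d j • x = 0}
      add_mem' := by intro x y hx hy; simp only [Set.mem_setOf_eq, smul_add] at *; rw [hx, hy, add_zero]
      zero_mem' := smul_zero _
      neg_mem' := by intro x hx; simp only [Set.mem_setOf_eq, smul_neg] at *; rw [hx, neg_zero] }
    with hS_def
  set Lt : AddSubgroup (Fin N → AddCircle (1:ℝ)) :=
    { carrier := {z | ∀ j, d j • z j = 0}
      add_mem' := by
        intro x y hx hy j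
        have : (x + y) j = x j + y j := rfl
        rw [this, smul_add, hx j, hy j, add_zero]
      zero_mem' := fun j => smul_zero _
      neg_mem' := by
        intro x hx j
        have : (-x) j = -(x j) := rfl
        rw [this, smul_neg, hx j, neg_zero] } with hLt_def
  -- membership transfer
  have hTbL : ∀ z, Tb z ∈ Lt ↔ z ∈ L := by
    intro z
    obtain ⟨u, rfl⟩ := hπsurj z
    rw [hTbπ]
    have h1 : π (Te u) ∈ Lt ↔ ∀ j, ∃ n : ℤ, (d j : ℝ) * T u j = n := by
      constructor
      · intro h j
        have := h j
        have hj : (π (Te u)) j = ((Te u j : ℝ) : AddCircle (1:ℝ)) := rfl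
        rw [hj, addCircle_zsmul_coe_eq_zero_iff] at this
        simpa [hTeapp] using this
      · intro h j
        have hj : (π (Te u)) j = ((Te u j : ℝ) : AddCircle (1:ℝ)) := rfl
        show d j • (π (Te u)) j = 0
        rw [hj, addCircle_zsmul_coe_eq_zero_iff]
        simpa [hTeapp] using h j
    have h2 : π u ∈ L ↔ ∀ i : Fin k, ∃ n : ℤ, (a i : ℝ) * T u (f i) = n := by
      rw [← hWmem, hWchar]
    rw [h1, h2]
    constructor
    · intro h i
      have := h (f i)
      rwa [hdf i] at this
    · intro h j
      by_cases hj : j ∈ Set.range f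
      · obtain ⟨i, rfl⟩ := hj
        rw [hdf i]
        exact h i
      · rw [hdnf j hj]
        exact ⟨0, by simp⟩
  -- Step 1: L ≃+ Lt
  set e1 : ↥L ≃+ ↥Lt :=
    { toFun := fun x => ⟨Tb ↑x, (hTbL ↑x).mpr x.2⟩
      invFun := fun y => ⟨Tbi ↑y, by
        have h := eT.right_inv ↑y
        have : Tb (Tbi ↑y) ∈ Lt := by
          show Tb (Tbi ↑y) ∈ Lt
          rw [show Tb (Tbi (↑y : Fin N → AddCircle (1:ℝ))) = ↑y from h]
          exact y.2
        exact (hTbL _).mp this⟩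
      left_inv := fun x => Subtype.ext (eT.left_inv ↑x)
      right_inv := fun y => Subtype.ext (eT.right_inv ↑y)
      map_add' := fun x y => Subtype.ext (eT.map_add ↑x ↑y) } with he1_def
  have he1cont : Continuous e1 := (hTbcont.comp continuous_subtype_val).subtype_mk _
  have he1symmcont : Continuous e1.symm := (hTbicont.comp continuous_subtype_val).subtype_mk _
  -- Step 2: Lt ≃+ product of the S j
  set e2 : ↥Lt ≃+ (∀ j, ↥(S j)) :=
    { toFun := fun z j => ⟨(z : Fin N → AddCircle (1:ℝ)) j, z.2 j⟩
      invFun := fun u => ⟨fun j => ↑(u j), fun j => (u j).2⟩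
      left_inv := fun z => rfl
      right_inv := fun u => rfl
      map_add' := fun z w => rfl } with he2_def
  have he2cont : Continuous e2 :=
    continuous_pi fun j => ((continuous_apply j).comp continuous_subtype_val).subtype_mk _
  have he2symmcont : Continuous e2.symm :=
    (continuous_pi fun j => continuous_subtype_val.comp (continuous_apply j)).subtype_mk _
  -- Step 3: split the product
  set p : Fin N → Prop := fun j => d j = 0 with hp_def
  set e3 : (∀ j, ↥(S j)) ≃+ (∀ j : {j // p j}, ↥(S ↑j)) × (∀ j : {j // ¬ p j}, ↥(S ↑j)) :=
    { Equiv.piEquivPiSubtypeProd p (fun j => ↥(S j)) with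
      map_add' := fun x y => rfl } with he3_def
  have he3cont : Continuous e3 := by
    apply Continuous.prodMk
    · exact continuous_pi fun j => continuous_apply _
    · exact continuous_pi fun j => continuous_apply _
  have he3symmcont : Continuous e3.symm := by
    refine continuous_pi fun j => ?_
    show Continuous fun q : (∀ j : {j // p j}, ↥(S ↑j)) × (∀ j : {j // ¬ p j}, ↥(S ↑j)) =>
      (Equiv.piEquivPiSubtypeProd p (fun j => ↥(S j))).symm q j
    simp only [Equiv.piEquivPiSubtypeProd_symm_apply]
    by_cases h : p j
    · simp only [dif_pos h]
      exact (continuous_apply _).comp continuous_fst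
    · simp only [dif_neg h]
      exact (continuous_apply _).comp continuous_snd
  -- Step 4: the torus part
  set n : ℕ := Fintype.card {j : Fin N // p j} with hn_def
  set σ : {j : Fin N // p j} ≃ Fin n := Fintype.equivFin {j : Fin N // p j} with hσ_def
  set e4a : (∀ j : {j // p j}, ↥(S ↑j)) ≃+ ({j : Fin N // p j} → AddCircle (1:ℝ)) :=
    { toFun := fun u j => ↑(u j)
      invFun := fun x j => ⟨x j, by
        show d ↑j • x j = 0
        rw [j.2, zero_zsmul]⟩
      left_inv := fun u => rfl
      right_inv := fun x => rfl
      map_add' := fun u v => rfl } with he4a_def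
  have he4acont : Continuous e4a :=
    continuous_pi fun j => continuous_subtype_val.comp (continuous_apply j)
  have he4asymmcont : Continuous e4a.symm :=
    continuous_pi fun j => (continuous_apply j).subtype_mk _
  set e4b : ({j : Fin N // p j} → AddCircle (1:ℝ)) ≃+ (Fin n → AddCircle (1:ℝ)) :=
    { toFun := fun x => x ∘ σ.symm
      invFun := fun x => x ∘ σ
      left_inv := fun x => by funext j; simp
      right_inv := fun x => by funext j; simp
      map_add' := fun x y => rfl } with he4b_def
  have he4bcont : Continuous e4b := continuous_pi fun i => continuous_apply _
  have he4bsymmcont : Continuous e4b.symm := continuous_pi fun i => continuous_apply _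
  -- the finite part
  set F : Type := ∀ j : {j : Fin N // ¬ p j}, ↥(S ↑j) with hF_def
  haveI hSfin : ∀ j : {j : Fin N // ¬ p j}, Finite ↥(S ↑j) := by
    intro j
    haveI := finite_torsion (d ↑j) j.2
    exact Finite.of_equiv {x : AddCircle (1:ℝ) // d ↑j • x = 0} (Equiv.subtypeEquivRight (fun x => Iff.rfl))
  haveI hFfin : Finite F :=
    inferInstanceAs (Finite (∀ j : {j : Fin N // ¬ p j}, ↥(S ↑j)))
  haveI hFdisc : DiscreteTopology F :=
    inferInstanceAs (DiscreteTopology (∀ j : {j : Fin N // ¬ p j}, ↥(S ↑j)))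
  -- assemble
  set e4 : ((∀ j : {j // p j}, ↥(S ↑j)) × F) ≃+ ((Fin n → AddCircle (1:ℝ)) × F) :=
    AddEquiv.prodCongr (e4a.trans e4b) (AddEquiv.refl F) with he4_def
  set e : ↥L ≃+ ((Fin n → AddCircle (1:ℝ)) × F) :=
    e1.trans (e2.trans (e3.trans e4)) with he_def
  refine ⟨n, ?_, F, inferInstance, Fintype.ofFinite F, inferInstance, hFdisc, e, ?_, ?_⟩
  · rw [hn_def]
    calc Fintype.card {j : Fin N // p j} ≤ Fintype.card (Fin N) := Fintype.card_subtype_le _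
    _ = N := Fintype.card_fin N
  · -- continuity of e
    have hcoe : ⇑e = ⇑e4 ∘ ⇑e3 ∘ ⇑e2 ∘ ⇑e1 := by
      rw [he_def]
      simp only [AddEquiv.coe_trans]
      rfl
    rw [hcoe]
    have he4cont : Continuous e4 := by
      rw [he4_def]
      have : ⇑(AddEquiv.prodCongr (e4a.trans e4b) (AddEquiv.refl F))
          = Prod.map (⇑e4b ∘ ⇑e4a) (id : F → F) := by
        funext q
        rfl
      rw [this]
      exact (he4bcont.comp he4acont).prodMap continuous_id
    exact he4cont.comp (he3cont.comp (he2cont.comp he1cont))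
  · have hcoe : ⇑e.symm = ⇑e1.symm ∘ ⇑e2.symm ∘ ⇑e3.symm ∘ ⇑e4.symm := by
      funext q
      rw [he_def]
      simp only [AddEquiv.symm_trans_apply]
      rfl
    rw [hcoe]
    have he4symmcont : Continuous e4.symm := by
      rw [he4_def]
      have : ⇑(AddEquiv.prodCongr (e4a.trans e4b) (AddEquiv.refl F)).symm
          = Prod.map (⇑e4a.symm ∘ ⇑e4b.symm) (id : F → F) := by
        funext q
        rfl
      rw [this]
      exact (he4asymmcont.comp he4bsymmcont).prodMap continuous_id
    exact he1symmcont.comp (he2symmcont.comp (he3symmcont.comp he4symmcont))
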